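/- Let Σ₁, Σ₂ be positive definite d×d matrices, m₁, m₂ ∈ ℝ^d, and define T = Σ₁^{-1/2} (Σ₁^{1/2} Σ₂ Σ₁^{1/2})^{1/2} Σ₁^{-1/2} and t = m₂ − T m₁. Then the affine map x ↦ T x + t pushes the Gaussian N(m₁, Σ₁) forward to N(m₂, Σ₂). -/

import Mathlib

open MeasureTheory Matrix Real
open scoped ENNReal

open Classical in
noncomputable def msqrt {d : ℕ} (A : Matrix (Fin d) (Fin d) ℝ) : Matrix (Fin d) (Fin d) ℝ :=
  if h : A.PosSemidef then
    (h.1.eigenvectorUnitary : Matrix (Fin d) (Fin d) ℝ) *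
      diagonal (fun i => ((Real.sqrt (h.1.eigenvalues i) : ℝ) : ℝ)) *
      (star h.1.eigenvectorUnitary : Matrix (Fin d) (Fin d) ℝ)
  else 0

noncomputable def gaussianPdf {ι : Type*} [Fintype ι] [DecidableEq ι]
    (m : EuclideanSpace ℝ ι) (S : Matrix ι ι ℝ) (x : EuclideanSpace ℝ ι) : ℝ :=
  Real.sqrt (((2 * Real.pi) ^ (Fintype.card ι) * S.det)⁻¹) *
    Real.exp (-(1 / 2) * ∑ i, ∑ j, (x i - m i) * S⁻¹ i j * (x j - m j))

noncomputable def gaussian {ι : Type*} [Fintype ι] [DecidableEq ι]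
    (m : EuclideanSpace ℝ ι) (S : Matrix ι ι ℝ) : Measure (EuclideanSpace ℝ ι) :=
  volume.withDensity fun x => ENNReal.ofReal (gaussianPdf m S x)

noncomputable def KLdiv {ι : Type*} [Fintype ι]
    (α β : Measure (EuclideanSpace ℝ ι)) : ℝ :=
  (∫ x, Real.log ((α.rnDeriv β x).toReal) ∂α) - (β Set.univ).toReal + (α Set.univ).toReal


/-- The identity map regarding a plain vector as a point of Euclidean space. -/
noncomputable def toEuc {ι : Type*} [Fintype ι] (v : ι → ℝ) : EuclideanSpace ℝ ι :=
  (WithLp.equiv 2 (ι → ℝ)).symm v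

/- Auxiliary lemmas -/

lemma aux_msqrt_eq {d : ℕ} {A : Matrix (Fin d) (Fin d) ℝ} (hA : A.PosSemidef) :
    msqrt A = cfc Real.sqrt A := by
  rw [hA.1.cfc_eq, IsHermitian.cfc, Unitary.conjStarAlgAut_apply, msqrt, dif_pos hA]
  rfl

open scoped MatrixOrder in
lemma aux_msqrt_psd {d : ℕ} {A : Matrix (Fin d) (Fin d) ℝ} (hA : A.PosSemidef) :
    (msqrt A).PosSemidef := by
  rw [aux_msqrt_eq hA]
  exact Matrix.nonneg_iff_posSemidef.mp (cfc_nonneg (fun x _ => Real.sqrt_nonneg x))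

lemma aux_msqrt_mul_self {d : ℕ} {A : Matrix (Fin d) (Fin d) ℝ} (hA : A.PosSemidef) :
    msqrt A * msqrt A = A := by
  rw [aux_msqrt_eq hA, ← cfc_mul Real.sqrt Real.sqrt A]
  conv_rhs => rw [← cfc_id ℝ A hA.1]
  apply cfc_congr
  intro x hx
  rw [hA.1.spectrum_real_eq_range_eigenvalues] at hx
  obtain ⟨i, rfl⟩ := hx
  exact Real.mul_self_sqrt (hA.eigenvalues_nonneg i)

lemma aux_posSemidef_det_nonneg {n : Type*} [Fintype n] [DecidableEq n]
    {A : Matrix n n ℝ} (hA : A.PosSemidef) : 0 ≤ A.det := by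
  have h := hA.isHermitian.det_eq_prod_eigenvalues
  rw [h]
  exact Finset.prod_nonneg fun i _ => hA.eigenvalues_nonneg i

lemma aux_map_withDensity_equiv {α β : Type*} [MeasurableSpace α] [MeasurableSpace β]
    (e : α ≃ᵐ β) (μ : Measure α) {g : α → ℝ≥0∞} (hg : Measurable g) :
    (μ.withDensity g).map e = (μ.map e).withDensity (g ∘ e.symm) := by
  ext s hs
  rw [MeasurableEquiv.map_apply, withDensity_apply _ (e.measurable hs),
    withDensity_apply _ hs, setLIntegral_map hs (hg.comp e.symm.measurable) e.measurable]
  simp only [Function.comp_apply, MeasurableEquiv.symm_apply_apply]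

lemma aux_smul_withDensity {α : Type*} [MeasurableSpace α]
    (c : ℝ≥0∞) (hc : c ≠ ⊤) (μ : Measure α) (g : α → ℝ≥0∞) :
    (c • μ).withDensity g = μ.withDensity (fun x => c * g x) := by
  ext s hs
  rw [withDensity_apply _ hs, withDensity_apply _ hs, Measure.restrict_smul,
    lintegral_smul_measure, smul_eq_mul, ← lintegral_const_mul' _ _ hc]

lemma aux_quad {d : ℕ} (A : Matrix (Fin d) (Fin d) ℝ) (v : Fin d → ℝ) :
    ∑ i, ∑ j, v i * A i j * v j = v ⬝ᵥ (A *ᵥ v) := by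
  simp only [dotProduct, Matrix.mulVec, Finset.mul_sum, mul_assoc]

/-- The affine map `x ↦ T x + t` with `T = Σ₁^{-1/2}(Σ₁^{1/2} Σ₂ Σ₁^{1/2})^{1/2} Σ₁^{-1/2}`
and `t = m₂ - T m₁` pushes `N(m₁, Σ₁)` forward to `N(m₂, Σ₂)`. -/
theorem gaussian_pushforward_affine {d : ℕ}
    (S₁ S₂ : Matrix (Fin d) (Fin d) ℝ)
    (hS₁ : S₁.PosDef) (hS₂ : S₂.PosDef)
    (m₁ m₂ : EuclideanSpace ℝ (Fin d))
    (T : Matrix (Fin d) (Fin d) ℝ)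
    (hT : T = (msqrt S₁)⁻¹ * msqrt (msqrt S₁ * S₂ * msqrt S₁) * (msqrt S₁)⁻¹)
    (t : EuclideanSpace ℝ (Fin d))
    (ht : t = m₂ - toEuc (T.mulVec m₁)) :
    Measure.map (fun x : EuclideanSpace ℝ (Fin d) => toEuc (T.mulVec x) + t)
      (gaussian m₁ S₁) = gaussian m₂ S₂ := by
  classical
  -- matrix preliminaries
  set s := msqrt S₁ with hs_def
  have hS1ps : S₁.PosSemidef := hS₁.posSemidef
  have hs_eq : s = cfc Real.sqrt S₁ := aux_msqrt_eq hS1ps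
  have hs_psd : s.PosSemidef := aux_msqrt_psd hS1ps
  have hss : s * s = S₁ := aux_msqrt_mul_self hS1ps
  have hdetS₁ : 0 < S₁.det := hS₁.det_pos
  have hdets : 0 < s.det := by
    have h2 : s.det * s.det = S₁.det := by rw [← det_mul, hss]
    have h0 : 0 ≤ s.det := aux_posSemidef_det_nonneg hs_psd
    rcases h0.lt_or_eq with h | h
    · exact h
    · exfalso; rw [← h] at h2; simp at h2; rw [← h2] at hdetS₁; simp at hdetS₁
  have hdets_ne : s.det ≠ 0 := ne_of_gt hdets
  have hM : (s * S₂ * s).PosSemidef := by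
    have h := hS₂.posSemidef.mul_mul_conjTranspose_same s
    rwa [hs_psd.isHermitian.eq] at h
  set r := msqrt (s * S₂ * s) with hr_def
  have hr_eq : r = cfc Real.sqrt (s * S₂ * s) := aux_msqrt_eq hM
  have hr_psd : r.PosSemidef := aux_msqrt_psd hM
  have hrr : r * r = s * S₂ * s := aux_msqrt_mul_self hM
  have hdetr : 0 < r.det := by
    have h2 : r.det * r.det = s.det * S₂.det * s.det := by
      rw [← det_mul, hrr, det_mul, det_mul]
    have h0 : 0 ≤ r.det := aux_posSemidef_det_nonneg hr_psd
    rcases h0.lt_or_eq with h | h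
    · exact h
    · exfalso
      have : 0 < s.det * S₂.det * s.det := mul_pos (mul_pos hdets hS₂.det_pos) hdets
      rw [← h2, ← h] at this; simp at this
  have hdetT : 0 < T.det := by
    rw [hT, det_mul, det_mul, det_nonsing_inv, Ring.inverse_eq_inv]
    exact mul_pos (mul_pos (inv_pos.mpr hdets) hdetr) (inv_pos.mpr hdets)
  have hdetT_ne : T.det ≠ 0 := ne_of_gt hdetT
  have h1 : s⁻¹ * s = 1 := nonsing_inv_mul s (isUnit_iff_ne_zero.mpr hdets_ne)
  have h2 : s * s⁻¹ = 1 := mul_nonsing_inv s (isUnit_iff_ne_zero.mpr hdets_ne)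
  -- T * S₁ * T = S₂
  have hTS : T * S₁ * T = S₂ := by
    rw [hT, ← hss]
    calc s⁻¹ * r * s⁻¹ * (s * s) * (s⁻¹ * r * s⁻¹)
        = s⁻¹ * (r * ((s⁻¹ * s) * (s * s⁻¹)) * r) * s⁻¹ := by
          simp only [Matrix.mul_assoc]
      _ = s⁻¹ * (r * r) * s⁻¹ := by rw [h1, h2]; simp [Matrix.mul_assoc]
      _ = s⁻¹ * (s * S₂ * s) * s⁻¹ := by rw [hrr]
      _ = (s⁻¹ * s) * S₂ * (s * s⁻¹) := by simp only [Matrix.mul_assoc]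
      _ = S₂ := by rw [h1, h2, Matrix.one_mul, Matrix.mul_one]
  have hdetS₂ : S₂.det = T.det ^ 2 * S₁.det := by
    rw [← hTS, det_mul, det_mul]; ring
  -- T is symmetric
  have hs_symm : sᵀ = s := by
    have := hs_psd.isHermitian.eq
    simpa [Matrix.conjTranspose_eq_transpose_of_trivial] using this
  have hr_symm : rᵀ = r := by
    have := hr_psd.isHermitian.eq
    simpa [Matrix.conjTranspose_eq_transpose_of_trivial] using this
  have hTsym : Tᵀ = T := by
    rw [hT, Matrix.transpose_mul, Matrix.transpose_mul, Matrix.transpose_nonsing_inv,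
      hs_symm, hr_symm]
    simp [Matrix.mul_assoc]
  -- T * S₂⁻¹ * T = S₁⁻¹
  have hT1 : T * T⁻¹ = 1 := mul_nonsing_inv T (isUnit_iff_ne_zero.mpr hdetT_ne)
  have hT2 : T⁻¹ * T = 1 := nonsing_inv_mul T (isUnit_iff_ne_zero.mpr hdetT_ne)
  have hTinv : T * S₂⁻¹ * T = S₁⁻¹ := by
    rw [← hTS, Matrix.mul_inv_rev, Matrix.mul_inv_rev]
    calc T * (T⁻¹ * (S₁⁻¹ * T⁻¹)) * T = T * T⁻¹ * S₁⁻¹ * (T⁻¹ * T) := by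
          simp only [Matrix.mul_assoc]
      _ = S₁⁻¹ := by rw [hT1, hT2, Matrix.one_mul, Matrix.mul_one]
  -- continuity and measurability
  have hLcont : Continuous fun x : EuclideanSpace ℝ (Fin d) => toEuc (T.mulVec x) :=
    LinearMap.continuous_of_finiteDimensional (Matrix.toEuclideanLin T)
  have hLinvcont : Continuous fun y : EuclideanSpace ℝ (Fin d) => toEuc (T⁻¹.mulVec y) :=
    LinearMap.continuous_of_finiteDimensional (Matrix.toEuclideanLin T⁻¹)
  -- the affine measurable equivalence
  let e : EuclideanSpace ℝ (Fin d) ≃ᵐ EuclideanSpace ℝ (Fin d) :=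
  { toFun := fun x => toEuc (T.mulVec x) + t
    invFun := fun y => toEuc (T⁻¹.mulVec (y - t))
    left_inv := by
      intro x
      show toEuc (T⁻¹.mulVec (toEuc (T.mulVec x) + t - t)) = x
      rw [add_sub_cancel_right]
      show toEuc (T⁻¹.mulVec (T.mulVec x)) = x
      apply PiLp.ext; intro i
      show (T⁻¹ *ᵥ (T *ᵥ x)) i = x i
      rw [Matrix.mulVec_mulVec, hT2, Matrix.one_mulVec]
    right_inv := by
      intro y
      show toEuc (T.mulVec (toEuc (T⁻¹.mulVec (y - t)))) + t = y
      have : toEuc (T.mulVec (toEuc (T⁻¹.mulVec (y - t)))) = y - t := by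
        apply PiLp.ext; intro i
        show (T *ᵥ (T⁻¹ *ᵥ (y - t))) i = (y - t) i
        rw [Matrix.mulVec_mulVec, hT1, Matrix.one_mulVec]
        rfl
      rw [this, sub_add_cancel]
    measurable_toFun := (hLcont.measurable.add_const t)
    measurable_invFun := (hLinvcont.comp (continuous_id.sub continuous_const)).measurable }
  have he_coe : ⇑e = fun x : EuclideanSpace ℝ (Fin d) => toEuc (T.mulVec x) + t := rfl
  have he_symm : ⇑e.symm = fun y : EuclideanSpace ℝ (Fin d) => toEuc (T⁻¹.mulVec (y - t)) := rfl
  -- density of gaussian pdf is measurable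
  have hpdf_cont : ∀ (m : EuclideanSpace ℝ (Fin d)) (S : Matrix (Fin d) (Fin d) ℝ),
      Continuous (gaussianPdf m S) := by
    intro m S
    apply Continuous.mul continuous_const
    apply Real.continuous_exp.comp
    apply Continuous.mul continuous_const
    apply continuous_finset_sum; intro i _
    apply continuous_finset_sum; intro j _
    have hi : Continuous fun x : EuclideanSpace ℝ (Fin d) => x i :=
      (EuclideanSpace.proj i (𝕜 := ℝ)).continuous
    have hj : Continuous fun x : EuclideanSpace ℝ (Fin d) => x j :=
      (EuclideanSpace.proj j (𝕜 := ℝ)).continuous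
    exact ((hi.sub continuous_const).mul continuous_const).mul (hj.sub continuous_const)
  have hg₁ : Measurable fun x : EuclideanSpace ℝ (Fin d) =>
      ENNReal.ofReal (gaussianPdf m₁ S₁ x) :=
    ENNReal.measurable_ofReal.comp (hpdf_cont m₁ S₁).measurable
  -- compute the pushforward of volume
  have hdetL : LinearMap.det (Matrix.toEuclideanLin T (𝕜 := ℝ)) = T.det := by
    rw [Matrix.toEuclideanLin_eq_toLin]; exact LinearMap.det_toLin _ _
  have hmapvol : Measure.map (⇑e) (volume : Measure (EuclideanSpace ℝ (Fin d)))
      = ENNReal.ofReal |T.det⁻¹| • volume := by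
    have hcomp : ⇑e = (fun y : EuclideanSpace ℝ (Fin d) => y + t) ∘
        (fun x : EuclideanSpace ℝ (Fin d) => toEuc (T.mulVec x)) := rfl
    rw [hcomp, ← Measure.map_map (measurable_add_const t) hLcont.measurable]
    have hlin : Measure.map (fun x : EuclideanSpace ℝ (Fin d) => toEuc (T.mulVec x))
        (volume : Measure (EuclideanSpace ℝ (Fin d)))
        = ENNReal.ofReal |T.det⁻¹| • volume := by
      have h := Measure.map_linearMap_addHaar_eq_smul_addHaar
        (volume : Measure (EuclideanSpace ℝ (Fin d)))
        (f := Matrix.toEuclideanLin T) (by rw [hdetL]; exact hdetT_ne)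
      rw [hdetL] at h
      exact h
    rw [hlin, Measure.map_smul, map_add_right_eq_self]
  -- key pointwise identity
  have hconst : |T.det⁻¹| * Real.sqrt (((2 * Real.pi) ^ (Fintype.card (Fin d)) * S₁.det)⁻¹)
      = Real.sqrt (((2 * Real.pi) ^ (Fintype.card (Fin d)) * S₂.det)⁻¹) := by
    have hpos : (0:ℝ) < (2 * Real.pi) ^ (Fintype.card (Fin d)) := by positivity
    rw [abs_of_pos (inv_pos.mpr hdetT), hdetS₂]
    rw [show ((2 * Real.pi) ^ (Fintype.card (Fin d)) * (T.det ^ 2 * S₁.det))⁻¹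
        = ((2 * Real.pi) ^ (Fintype.card (Fin d)) * S₁.det)⁻¹ * (T.det ^ 2)⁻¹ by
      field_simp]
    rw [Real.sqrt_mul (by positivity), Real.sqrt_inv (T.det ^ 2), Real.sqrt_sq hdetT.le]
    ring
  have hquad : ∀ x : EuclideanSpace ℝ (Fin d),
      ∑ i, ∑ j, ((toEuc (T.mulVec x) + t) i - m₂ i) * S₂⁻¹ i j *
        ((toEuc (T.mulVec x) + t) j - m₂ j)
      = ∑ i, ∑ j, (x i - m₁ i) * S₁⁻¹ i j * (x j - m₁ j) := by
    intro x
    set u : Fin d → ℝ := fun k => x k - m₁ k with hu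
    have hcoord : ∀ i, (toEuc (T.mulVec x) + t) i - m₂ i = (T *ᵥ u) i := by
      intro i
      rw [ht]
      show (T *ᵥ x) i + (m₂ i - (T *ᵥ m₁) i) - m₂ i = (T *ᵥ u) i
      have : (T *ᵥ u) i = (T *ᵥ x) i - (T *ᵥ m₁) i := by
        simp only [u, Matrix.mulVec, dotProduct, mul_sub, Finset.sum_sub_distrib]
      rw [this]; ring
    simp only [hcoord]
    rw [aux_quad, aux_quad]
    have hvec : u ᵥ* T = T *ᵥ u := by
      conv_lhs => rw [← hTsym]
      rw [Matrix.vecMul_transpose]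
    calc (T *ᵥ u) ⬝ᵥ S₂⁻¹ *ᵥ (T *ᵥ u)
        = (u ᵥ* T) ⬝ᵥ (S₂⁻¹ * T) *ᵥ u := by rw [Matrix.mulVec_mulVec, hvec]
      _ = (u ᵥ* (T * (S₂⁻¹ * T))) ⬝ᵥ u := by
          rw [Matrix.dotProduct_mulVec, Matrix.vecMul_vecMul]
      _ = u ⬝ᵥ (T * (S₂⁻¹ * T)) *ᵥ u := by rw [← Matrix.dotProduct_mulVec]
      _ = u ⬝ᵥ S₁⁻¹ *ᵥ u := by rw [← Matrix.mul_assoc, hTinv]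
  have key : ∀ x : EuclideanSpace ℝ (Fin d),
      ENNReal.ofReal |T.det⁻¹| * ENNReal.ofReal (gaussianPdf m₁ S₁ x)
      = ENNReal.ofReal (gaussianPdf m₂ S₂ (toEuc (T.mulVec x) + t)) := by
    intro x
    rw [← ENNReal.ofReal_mul (abs_nonneg _)]
    congr 1
    unfold gaussianPdf
    rw [hquad x, ← hconst]
    ring
  -- put everything together
  rw [gaussian, show (fun x : EuclideanSpace ℝ (Fin d) => toEuc (T.mulVec x) + t) = ⇑e from rfl,
    aux_map_withDensity_equiv e _ hg₁, hmapvol, aux_smul_withDensity _ ENNReal.ofReal_ne_top]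
  rw [gaussian]
  congr 1
  funext y
  have h := key (e.symm y)
  rw [Function.comp_apply, h]
  congr 1
  have : toEuc (T.mulVec (e.symm y)) + t = e (e.symm y) := rfl
  rw [this, MeasurableEquiv.apply_symm_apply]
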